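/- arXiv:0901.2542 — 4 statements merged into one kernel-verified Lean document; each statement's English description precedes it below -/
import Mathlib

section
/- Let T be a trace-preserving linear map on d×d complex matrices, ρ a density matrix, and A a Hermitian d×d matrix. Define the delayed vectors v_τ ∈ ℝ^ℕ by (v_τ)_k = tr(A · T^(τ+k-1)(ρ)) for τ, k ∈ ℕ, and let 𝒱 = span{v_τ : τ ∈ ℕ₀}. Let 𝒞 be the real vector space of Hermitian matrices H such that tr(H · T^t(ρ)) is independent of t ∈ ℕ₀. Then dim 𝒞 + dim 𝒱 ≤ d² + 1. -/
open Matrix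
open scoped ComplexOrder
open Cardinal

section Aux

variable {V : Type*} [AddCommGroup V] [Module ℝ V] [Module ℂ V] [IsScalarTower ℝ ℂ V]

/-- If `J` is a conjugation-like real-linear map fixing every `f i`, then real linear
independence implies complex linear independence. -/
lemma linearIndependent_complex_of_real
    (J : V →ₗ[ℝ] V) (hJ : ∀ (c : ℂ) (x : V), J (c • x) = (starRingEnd ℂ c) • J x)
    {ι : Type*} {f : ι → V} (hf : ∀ i, J (f i) = f i)
    (h : LinearIndependent ℝ f) : LinearIndependent ℂ f := by
  rw [linearIndependent_iff'] at h ⊢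
  have key : ∀ (s : Finset ι) (g : ι → ℂ), (∑ i ∈ s, g i • f i) = 0 →
      ∀ i ∈ s, (g i).re = 0 := by
    intro s g hg i hi
    have h1 : (∑ i ∈ s, (starRingEnd ℂ (g i)) • f i) = 0 := by
      have := congrArg J hg
      rw [map_sum] at this
      simp only [hJ, hf, map_zero] at this
      exact this
    have h2 : (∑ i ∈ s, ((2 * (g i).re : ℝ)) • f i) = 0 := by
      have hsum : (∑ i ∈ s, g i • f i) + (∑ i ∈ s, (starRingEnd ℂ (g i)) • f i) = 0 := by
        rw [hg, h1, add_zero]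
      rw [← Finset.sum_add_distrib] at hsum
      calc (∑ i ∈ s, ((2 * (g i).re : ℝ)) • f i)
          = ∑ i ∈ s, (g i • f i + (starRingEnd ℂ (g i)) • f i) := by
            refine Finset.sum_congr rfl fun i _ => ?_
            rw [← add_smul]
            rw [show g i + (starRingEnd ℂ) (g i) = ((2 * (g i).re : ℝ) : ℂ) from Complex.add_conj _]
            rw [show ((2 * (g i).re : ℝ) : ℂ) • f i = ((2 * (g i).re : ℝ)) • f i from by
              rw [← Complex.coe_algebraMap, algebraMap_smul]]
        _ = 0 := hsum
    have := h s _ h2 i hi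
    linarith
  intro s g hg i hi
  have hre : (g i).re = 0 := key s g hg i hi
  have hg2 : (∑ j ∈ s, ((-Complex.I) * g j) • f j) = 0 := by
    calc (∑ j ∈ s, ((-Complex.I) * g j) • f j)
        = (-Complex.I) • ∑ j ∈ s, g j • f j := by
          rw [Finset.smul_sum]
          exact Finset.sum_congr rfl fun j _ => by rw [smul_smul]
      _ = 0 := by rw [hg, smul_zero]
  have him : ((-Complex.I) * g i).re = 0 := key s _ hg2 i hi
  have : (g i).im = 0 := by
    simpa [Complex.mul_re] using him
  exact Complex.ext hre this

/-- The trace pairing `H ↦ (X ↦ tr (H * X))` as a linear map into the dual. -/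
noncomputable def tracePairing (d : ℕ) :
    Matrix (Fin d) (Fin d) ℂ →ₗ[ℂ] Module.Dual ℂ (Matrix (Fin d) (Fin d) ℂ) :=
  LinearMap.mk₂ ℂ (fun H X => (H * X).trace)
    (fun H₁ H₂ X => by simp [Matrix.add_mul])
    (fun c H X => by simp [Matrix.smul_mul])
    (fun H X₁ X₂ => by simp [Matrix.mul_add])
    (fun c H X => by simp [Matrix.mul_smul])

lemma trace_mul_stdBasisMatrix (d : ℕ) (H : Matrix (Fin d) (Fin d) ℂ) (i j : Fin d) :
    (H * Matrix.single j i (1 : ℂ)).trace = H i j := by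
  simp [Matrix.trace, Matrix.mul_apply, Matrix.single, Matrix.diag, ite_and,
    Finset.sum_ite_eq, Finset.sum_ite_eq']

lemma tracePairing_injective (d : ℕ) : Function.Injective (tracePairing d) := by
  intro H K h
  ext i j
  have := LinearMap.congr_fun h (Matrix.single j i (1 : ℂ))
  simpa [tracePairing, LinearMap.mk₂_apply, trace_mul_stdBasisMatrix] using this

/-- The trace pairing as a linear equivalence. -/
noncomputable def tracePairingEquiv (d : ℕ) :
    Matrix (Fin d) (Fin d) ℂ ≃ₗ[ℂ] Module.Dual ℂ (Matrix (Fin d) (Fin d) ℂ) :=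
  (tracePairing d).linearEquivOfInjective (tracePairing_injective d)
    Subspace.dual_finrank_eq.symm

/-- Conjugate transpose as a real-linear map. -/
noncomputable def conjTransposeR (d : ℕ) :
    Matrix (Fin d) (Fin d) ℂ →ₗ[ℝ] Matrix (Fin d) (Fin d) ℂ where
  toFun X := Xᴴ
  map_add' X Y := conjTranspose_add X Y
  map_smul' r X := by
    show (r • X)ᴴ = r • Xᴴ
    rw [conjTranspose_smul, star_trivial]

/-- Pointwise conjugation on sequences as a real-linear map. -/
noncomputable def conjPiR : (ℕ → ℂ) →ₗ[ℝ] (ℕ → ℂ) where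
  toFun x := fun k => starRingEnd ℂ (x k)
  map_add' x y := by funext k; simp
  map_smul' r x := by
    funext k
    simp [Complex.real_smul]

/-- Coercion of real sequences to complex sequences, as a real-linear map. -/
noncomputable def coePiR : (ℕ → ℝ) →ₗ[ℝ] (ℕ → ℂ) where
  toFun x := fun k => (x k : ℂ)
  map_add' x y := by funext k; simp
  map_smul' r x := by
    funext k
    simp [Complex.real_smul]

end Aux

/-- dim 𝒞 + dim 𝒱 ≤ d² + 1 for trace-preserving linear evolution. -/
theorem dim_conserved_add_dim_delayed_le (d : ℕ)
    (T : Module.End ℂ (Matrix (Fin d) (Fin d) ℂ))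
    (hT : ∀ X, (T X).trace = X.trace)
    (ρ : Matrix (Fin d) (Fin d) ℂ) (hρ : ρ.PosSemidef) (hρ1 : ρ.trace = 1)
    (A : Matrix (Fin d) (Fin d) ℂ) (hA : A.IsHermitian)
    (v : ℕ → ℕ → ℝ)
    (hv : ∀ τ k : ℕ, (v τ k : ℂ) = (A * ((T ^ (τ + k)) ρ)).trace) :
    Module.rank ℝ ↥(Submodule.span ℝ
        {H : Matrix (Fin d) (Fin d) ℂ | H.IsHermitian ∧
          ∀ t : ℕ, (H * ((T ^ t) ρ)).trace = (H * ρ).trace}) +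
      Module.rank ℝ ↥(Submodule.span ℝ (Set.range v)) ≤ ((d ^ 2 + 1 : ℕ) : Cardinal) := by
  classical
  let Mat := Matrix (Fin d) (Fin d) ℂ
  set C : Set Mat := {H : Mat | H.IsHermitian ∧
      ∀ t : ℕ, (H * ((T ^ t) ρ)).trace = (H * ρ).trace} with hCdef
  set S₀ : Submodule ℂ Mat := Submodule.span ℂ (Set.range fun τ : ℕ => (T ^ τ) ρ - ρ) with hS₀
  set N : Submodule ℂ Mat := S₀.dualAnnihilator.comap (tracePairingEquiv d).toLinearMap with hNdef
  -- membership in N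
  have hCN : ∀ H ∈ C, H ∈ N := by
    intro H hH
    simp only [hNdef, Submodule.mem_comap, Submodule.mem_dualAnnihilator]
    intro X hX
    have hker : S₀ ≤ LinearMap.ker (tracePairing d H) := by
      rw [hS₀, Submodule.span_le]
      rintro _ ⟨τ, rfl⟩
      show (T ^ τ) ρ - ρ ∈ LinearMap.ker (tracePairing d H)
      rw [LinearMap.mem_ker]
      show (H * ((T ^ τ) ρ - ρ)).trace = 0
      rw [Matrix.mul_sub, Matrix.trace_sub, hH.2 τ, sub_self]
    have h0 : tracePairing d H X = 0 := hker hX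
    have : (tracePairingEquiv d).toLinearMap H = tracePairing d H := rfl
    rw [this]
    exact h0
  -- finrank identity for N
  have hd2 : Module.finrank ℂ Mat = d ^ 2 := by
    rw [show Module.finrank ℂ Mat = Module.finrank ℂ (Matrix (Fin d) (Fin d) ℂ) from rfl,
      Module.finrank_matrix]
    simp [sq]
  have hNfr : Module.finrank ℂ N + Module.finrank ℂ S₀ = d ^ 2 := by
    have h1 : Module.finrank ℂ N = Module.finrank ℂ S₀.dualAnnihilator :=
      LinearEquiv.finrank_eq (LinearEquiv.ofSubmodule' (tracePairingEquiv d) S₀.dualAnnihilator)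
    have h2 := Submodule.finrank_quotient_add_finrank S₀
    have h3 : Module.finrank ℂ (Mat ⧸ S₀) = Module.finrank ℂ S₀.dualAnnihilator :=
      LinearEquiv.finrank_eq (Subspace.quotEquivAnnihilator S₀)
    omega
  -- the conserved side
  obtain ⟨bC, hbC_sub, hbC_span, hbC_li⟩ := exists_linearIndependent ℝ C
  have hrankC : Module.rank ℝ ↥(Submodule.span ℝ C) = #bC := by
    rw [← hbC_span, rank_span_set hbC_li]
  have hliC : LinearIndependent ℂ ((↑) : bC → Mat) := by
    refine linearIndependent_complex_of_real (conjTransposeR d) ?_ ?_ hbC_li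
    · intro c X
      show (c • X)ᴴ = (starRingEnd ℂ c) • Xᴴ
      rw [conjTranspose_smul]
      rfl
    · intro i
      exact (hbC_sub i.2).1
  have hCle : #bC ≤ (Module.finrank ℂ N : Cardinal) := by
    have hfam : LinearIndependent ℂ (fun i : bC => (⟨(i : Mat), hCN _ (hbC_sub i.2)⟩ : N)) := by
      apply LinearIndependent.of_comp N.subtype
      exact hliC
    calc #↑bC ≤ Module.rank ℂ N := hfam.cardinal_le_rank
      _ = (Module.finrank ℂ N : Cardinal) := (Module.finrank_eq_rank ℂ N).symm
  -- the delayed-vector side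
  set ψ : Mat →ₗ[ℂ] (ℕ → ℂ) := LinearMap.pi fun k =>
    (Matrix.traceLinearMap (Fin d) ℂ ℂ) ∘ₗ (LinearMap.mulLeft ℂ A) ∘ₗ (T ^ k : Module.End ℂ Mat)
    with hψ
  have hψ_apply : ∀ X k, ψ X k = (A * ((T ^ k) X)).trace := fun X k => rfl
  set S : Submodule ℂ Mat := Submodule.span ℂ (Set.range fun τ : ℕ => (T ^ τ) ρ) with hS
  set W : Submodule ℂ (ℕ → ℂ) := S.map ψ with hW
  have hv' : ∀ τ : ℕ, coePiR (v τ) = ψ ((T ^ τ) ρ) := by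
    intro τ
    funext k
    show ((v τ k : ℝ) : ℂ) = ψ ((T ^ τ) ρ) k
    rw [hψ_apply, hv τ k]
    congr 1
    rw [add_comm τ k, pow_add]
    rfl
  obtain ⟨bV, hbV_sub, hbV_span, hbV_li⟩ := exists_linearIndependent ℝ (Set.range v)
  have hrankV : Module.rank ℝ ↥(Submodule.span ℝ (Set.range v)) = #bV := by
    rw [← hbV_span, rank_span_set hbV_li]
  -- map bV into ℕ → ℂ
  have hcoe_inj : Function.Injective coePiR := by
    intro x y h
    funext k
    exact Complex.ofReal_injective (congrFun h k)
  have hliV_R : LinearIndependent ℝ (fun i : bV => coePiR (i : ℕ → ℝ)) := by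
    have := hbV_li.map' coePiR (LinearMap.ker_eq_bot.mpr hcoe_inj)
    exact this
  have hliV : LinearIndependent ℂ (fun i : bV => coePiR (i : ℕ → ℝ)) := by
    refine linearIndependent_complex_of_real conjPiR ?_ ?_ hliV_R
    · intro c x
      funext k
      simp [conjPiR, mul_comm]
    · intro i
      funext k
      simp [conjPiR, coePiR]
  have hmemW : ∀ i : bV, coePiR (i : ℕ → ℝ) ∈ W := by
    intro i
    obtain ⟨τ, hτ⟩ := hbV_sub i.2
    rw [← hτ, hv' τ]
    exact Submodule.mem_map_of_mem (Submodule.subset_span ⟨τ, rfl⟩)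
  have hVle : #bV ≤ (Module.finrank ℂ S₀ + 1 : Cardinal) := by
    have hfam : LinearIndependent ℂ (fun i : bV => (⟨coePiR (i : ℕ → ℝ), hmemW i⟩ : W)) :=
      LinearIndependent.of_comp W.subtype hliV
    have h1 : #bV ≤ Module.rank ℂ W := hfam.cardinal_le_rank
    have h2 : Module.rank ℂ W ≤ Module.rank ℂ S := rank_map_le ψ S
    have hρne : ρ ≠ 0 := fun h => by simp [h] at hρ1
    have hSle : S ≤ S₀ ⊔ (ℂ ∙ ρ) := by
      rw [hS, Submodule.span_le]
      rintro _ ⟨τ, rfl⟩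
      show (T ^ τ) ρ ∈ (S₀ ⊔ (ℂ ∙ ρ) : Submodule ℂ Mat)
      have heq : (T ^ τ) ρ = ((T ^ τ) ρ - ρ) + ρ := by abel
      rw [heq]
      exact Submodule.add_mem _
        (Submodule.mem_sup_left (Submodule.subset_span ⟨τ, rfl⟩))
        (Submodule.mem_sup_right (Submodule.mem_span_singleton_self ρ))
    have h3 : Module.finrank ℂ S ≤ Module.finrank ℂ S₀ + 1 := by
      have h4 := Submodule.finrank_sup_add_finrank_inf_eq S₀ (ℂ ∙ ρ)
      have h5 : Module.finrank ℂ (ℂ ∙ ρ) = 1 := finrank_span_singleton hρne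
      have h6 : Module.finrank ℂ S ≤ Module.finrank ℂ ↥(S₀ ⊔ (ℂ ∙ ρ)) :=
        Submodule.finrank_mono hSle
      rw [h5] at h4
      omega
    calc #bV ≤ Module.rank ℂ S := h1.trans h2
      _ = (Module.finrank ℂ S : Cardinal) := (Module.finrank_eq_rank ℂ S).symm
      _ ≤ (Module.finrank ℂ S₀ + 1 : Cardinal) := by exact_mod_cast Nat.cast_le.mpr h3
  -- combine
  rw [hrankC, hrankV]
  calc #bC + #bV ≤ (Module.finrank ℂ N : Cardinal) + (Module.finrank ℂ S₀ + 1 : Cardinal) :=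
        add_le_add hCle hVle
    _ = ((Module.finrank ℂ N + Module.finrank ℂ S₀ + 1 : ℕ) : Cardinal) := by push_cast; ring
    _ = ((d ^ 2 + 1 : ℕ) : Cardinal) := by rw [hNfr]
end

section
/- Let T be a trace-preserving linear map on M_d(ℂ), ρ a density matrix, and A Hermitian. Suppose T is ergodic with respect to both A and ρ, i.e., the orbits {(T*)^t(A) : t ∈ ℕ₀} and {T^t(ρ) : t ∈ ℕ₀} each span all of M_d(ℂ). Then the space 𝒱 spanned by the delayed vectors v_τ, with (v_τ)_k = tr(A · T^(τ+k-1)(ρ)), has dimension exactly d². -/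
set_option maxHeartbeats 1000000


open Matrix
open scoped ComplexOrder

namespace DelayedAux

noncomputable def cmap : (ℕ → ℝ) →ₗ[ℝ] (ℕ → ℂ) :=
  LinearMap.compLeft Complex.ofRealAm.toLinearMap ℕ

lemma cmap_apply (f : ℕ → ℝ) (n : ℕ) : cmap f n = (f n : ℂ) := rfl

lemma cmap_injective : Function.Injective cmap := by
  intro f g h
  funext n
  have := congrFun h n
  simpa [cmap_apply] using this

/-- A real-linearly independent family of real sequences is complex-linearly independent
after complexification. -/
lemma li_complex {ι : Type} {u : ι → ℕ → ℝ}
    (hu : LinearIndependent ℝ u) : LinearIndependent ℂ (fun i => cmap (u i)) := by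
  rw [linearIndependent_iff'] at hu ⊢
  intro s g hg i hi
  have hcoord : ∀ n : ℕ, ∑ j ∈ s, g j * (u j n : ℂ) = 0 := by
    intro n
    have h := congrFun hg n
    simpa [Finset.sum_apply, cmap_apply] using h
  have hre : ∀ j ∈ s, (g j).re = 0 := by
    apply hu s (fun j => (g j).re)
    funext n
    have := congrArg Complex.re (hcoord n)
    simpa [Complex.re_sum, Complex.mul_re, Finset.sum_apply] using this
  have him : ∀ j ∈ s, (g j).im = 0 := by
    apply hu s (fun j => (g j).im)
    funext n
    have := congrArg Complex.im (hcoord n)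
    simpa [Complex.im_sum, Complex.mul_im, Finset.sum_apply] using this
  exact Complex.ext (hre i hi) (him i hi)

lemma rank_span_real_eq_complex (S : Set (ℕ → ℝ)) :
    Module.rank ℝ ↥(Submodule.span ℝ S) = Module.rank ℂ ↥(Submodule.span ℂ (cmap '' S)) := by
  apply le_antisymm
  · obtain ⟨b, hbS, hspan, hli⟩ := exists_linearIndependent ℝ S
    rw [← hspan, rank_span_set hli]
    have hliC : LinearIndependent ℂ ((↑) : (cmap '' b) → (ℕ → ℂ)) :=
      LinearIndepOn.id_image (v := ⇑cmap) (li_complex hli)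
    calc (Cardinal.mk ↥b) = (Cardinal.mk ↥(⇑cmap '' b)) := (Cardinal.mk_image_eq cmap_injective).symm
      _ = Module.rank ℂ ↥(Submodule.span ℂ (cmap '' b)) := (rank_span_set hliC).symm
      _ ≤ Module.rank ℂ ↥(Submodule.span ℂ (cmap '' S)) :=
          Submodule.rank_mono (Submodule.span_mono (Set.image_mono hbS))
  · obtain ⟨b, hbS, hspan, hli⟩ := exists_linearIndependent ℂ (cmap '' S)
    rw [← hspan, rank_span_set hli]
    set b' : Set (ℕ → ℝ) := S ∩ cmap ⁻¹' b with hb'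
    have himg : cmap '' b' = b := by
      apply Set.Subset.antisymm
      · rintro _ ⟨x, ⟨hxS, hxb⟩, rfl⟩; exact hxb
      · intro y hy
        obtain ⟨x, hxS, rfl⟩ := hbS hy
        exact ⟨x, ⟨hxS, hy⟩, rfl⟩
    have einj : Function.Injective (fun x : b' => (⟨cmap x, by rw [← himg]; exact ⟨x, x.2, rfl⟩⟩ : b)) := by
      intro x y hxy
      have : cmap (x : ℕ → ℝ) = cmap (y : ℕ → ℝ) := congrArg Subtype.val hxy
      exact Subtype.ext (cmap_injective this)
    have hliC' : LinearIndependent ℂ (fun x : b' => cmap (x : ℕ → ℝ)) :=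
      hli.comp _ einj
    have hliR' : LinearIndependent ℝ (fun x : b' => cmap (x : ℕ → ℝ)) := by
      refine hliC'.restrict_scalars ?_
      intro r s h
      simpa using h
    have hliR : LinearIndependent ℝ ((↑) : b' → (ℕ → ℝ)) :=
      LinearIndependent.of_comp cmap hliR'
    calc (Cardinal.mk ↥b) = (Cardinal.mk ↥(⇑cmap '' b')) := by rw [himg]
      _ = Cardinal.mk ↥b' := Cardinal.mk_image_eq cmap_injective
      _ = Module.rank ℝ ↥(Submodule.span ℝ b') := (rank_span_set hliR).symm
      _ ≤ Module.rank ℝ ↥(Submodule.span ℝ S) :=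
          Submodule.rank_mono (Submodule.span_mono Set.inter_subset_left)

end DelayedAux

open DelayedAux

/-- if `T` is ergodic w.r.t. both `A` and `ρ`, the space spanned by the
delayed vectors has dimension exactly `d²`. -/
theorem dim_delayed_eq_of_ergodic (d : ℕ)
    (T Tstar : Module.End ℂ (Matrix (Fin d) (Fin d) ℂ))
    (hT : ∀ X, (T X).trace = X.trace)
    (hadj : ∀ (B X : Matrix (Fin d) (Fin d) ℂ), (B * T X).trace = (Tstar B * X).trace)
    (ρ : Matrix (Fin d) (Fin d) ℂ) (hρ : ρ.PosSemidef) (hρ1 : ρ.trace = 1)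
    (A : Matrix (Fin d) (Fin d) ℂ) (hA : A.IsHermitian)
    (hergA : Submodule.span ℂ (Set.range fun t : ℕ => (Tstar ^ t) A) = ⊤)
    (hergρ : Submodule.span ℂ (Set.range fun t : ℕ => (T ^ t) ρ) = ⊤)
    (v : ℕ → ℕ → ℝ)
    (hv : ∀ τ k : ℕ, (v τ k : ℂ) = (A * ((T ^ (τ + k)) ρ)).trace) :
    Module.rank ℝ ↥(Submodule.span ℝ (Set.range v)) = ((d ^ 2 : ℕ) : Cardinal) := by
  classical
  -- the complex observation map
  set Ψ : Matrix (Fin d) (Fin d) ℂ →ₗ[ℂ] (ℕ → ℂ) :=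
    { toFun := fun X k => (A * (T ^ k) X).trace
      map_add' := by
        intro X Y; funext k
        simp [map_add, Matrix.mul_add]
      map_smul' := by
        intro r X; funext k
        simp [_root_.map_smul, Matrix.mul_smul] } with hΨ
  -- adjoint formula
  have key : ∀ (k : ℕ) (X : Matrix (Fin d) (Fin d) ℂ),
      (A * (T ^ k) X).trace = ((Tstar ^ k) A * X).trace := by
    intro k
    induction k with
    | zero => intro X; simp
    | succ n ih =>
      intro X
      have h1 : (T ^ (n + 1)) X = (T ^ n) (T X) := by
        rw [pow_succ, Module.End.mul_apply]
      rw [h1, ih (T X), hadj, ← Module.End.mul_apply, ← pow_succ']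
  -- Ψ is injective
  have hinj : Function.Injective Ψ := by
    rw [← LinearMap.ker_eq_bot]
    rw [eq_bot_iff]
    intro X hX
    have hX' : ∀ k : ℕ, ((Tstar ^ k) A * X).trace = 0 := by
      intro k
      have := congrFun (LinearMap.mem_ker.mp hX) k
      rw [← key]
      exact this
    -- the functional B ↦ tr(B X) vanishes on a spanning set
    set f : Matrix (Fin d) (Fin d) ℂ →ₗ[ℂ] ℂ :=
      { toFun := fun B => (B * X).trace
        map_add' := by intro B C; simp [add_mul]
        map_smul' := by intro r B; simp [Matrix.smul_mul] } with hf
    have hker : Submodule.span ℂ (Set.range fun t : ℕ => (Tstar ^ t) A) ≤ LinearMap.ker f := by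
      rw [Submodule.span_le]
      rintro _ ⟨t, rfl⟩
      simpa [hf] using hX' t
    rw [hergA, top_le_iff] at hker
    have hall : ∀ B : Matrix (Fin d) (Fin d) ℂ, (B * X).trace = 0 := by
      intro B
      have : B ∈ LinearMap.ker f := by rw [hker]; trivial
      simpa [hf] using this
    have : X = 0 := by
      ext i j
      have h := hall (Matrix.single j i 1)
      have htr : (Matrix.single j i (1 : ℂ) * X).trace = X i j := by
        simp [Matrix.trace, Matrix.diag, Matrix.mul_apply, Matrix.single,
          Finset.sum_ite_eq, ite_and]
      rw [htr] at h
      simpa using h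
    simpa [this] using Submodule.zero_mem ⊥
  -- identify the complexified delayed vectors
  have himg : cmap '' Set.range v = Set.range (fun τ : ℕ => Ψ ((T ^ τ) ρ)) := by
    rw [← Set.range_comp]
    apply congrArg
    funext τ
    funext k
    have hTT : (T ^ k) ((T ^ τ) ρ) = (T ^ (τ + k)) ρ := by
      rw [← Module.End.mul_apply, ← pow_add, add_comm]
    show (v τ k : ℂ) = (A * (T ^ k) ((T ^ τ) ρ)).trace
    rw [hTT, hv]
  -- compute the complex rank
  have hrank : Module.rank ℂ ↥(Submodule.span ℂ (cmap '' Set.range v)) = ((d ^ 2 : ℕ) : Cardinal) := by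
    rw [himg]
    have : Set.range (fun τ : ℕ => Ψ ((T ^ τ) ρ)) = Ψ '' Set.range (fun τ : ℕ => (T ^ τ) ρ) := by
      rw [← Set.range_comp]; rfl
    rw [this, Submodule.span_image, hergρ, Submodule.map_top]
    rw [rank_range_of_injective Ψ hinj]
    rw [rank_matrix'']
    simp [Cardinal.mk_fin, pow_two]
  rw [rank_span_real_eq_complex, hrank]
end

section
/- Let M be a complex square matrix with spectral radius at most 1 such that every Jordan block for an eigenvalue of modulus 1 has size 1. Then M is similar to a contraction: there exists an invertible matrix S such that ‖S M S⁻¹‖ ≤ 1 in operator norm. -/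
open Matrix Module
open scoped Matrix.Norms.L2Operator

section Aux
open Module Finset Filter Set
open scoped DirectSum

theorem aux_pow_contraction (V : Type) [NormedAddCommGroup V] [InnerProductSpace ℂ V]
    [FiniteDimensional ℂ V]
    (A : V →ₗ[ℂ] V) (k : ℕ) (hk : 0 < k) (hAk : ∀ x, ‖(A ^ k) x‖ ≤ ‖x‖) :
    ∃ (d : ℕ) (e : V ≃ₗ[ℂ] EuclideanSpace ℂ (Fin d)), ∀ x, ‖e (A x)‖ ≤ ‖e x‖ := by
  classical
  set G := PiLp 2 (fun _ : Fin k => V) with hG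
  let j : V →ₗ[ℂ] G :=
    (WithLp.linearEquiv 2 ℂ (∀ _ : Fin k, V)).symm.toLinearMap.comp
      (LinearMap.pi fun i : Fin k => A ^ (i : ℕ))
  have hj : ∀ (x : V) (i : Fin k), j x i = (A ^ (i : ℕ)) x := fun x i => rfl
  have hinj : Function.Injective j := by
    intro x y hxy
    have := congrArg (fun z : G => z ⟨0, hk⟩) hxy
    simpa [hj] using this
  have hnorm : ∀ x : V, ‖j x‖ ^ 2 = ∑ i ∈ range k, ‖(A ^ i) x‖ ^ 2 := by
    intro x
    rw [PiLp.norm_sq_eq_of_L2]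
    simp only [hj]
    exact Fin.sum_univ_eq_sum_range (fun i => ‖(A ^ i) x‖ ^ 2) k
  have hcontr : ∀ x : V, ‖j (A x)‖ ≤ ‖j x‖ := by
    intro x
    have key : ‖j (A x)‖ ^ 2 ≤ ‖j x‖ ^ 2 := by
      rw [hnorm, hnorm]
      have e1 : ∀ i, (A ^ i) (A x) = (A ^ (i + 1)) x := by
        intro i; rw [pow_succ]; rfl
      simp only [e1]
      have h2 : (∑ i ∈ range k, ‖(A ^ (i + 1)) x‖ ^ 2) + ‖(A ^ 0) x‖ ^ 2
          = (∑ i ∈ range k, ‖(A ^ i) x‖ ^ 2) + ‖(A ^ k) x‖ ^ 2 := by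
        rw [← Finset.sum_range_succ' (fun i => ‖(A ^ i) x‖ ^ 2) k,
          Finset.sum_range_succ]
      have h3 : ‖(A ^ k) x‖ ^ 2 ≤ ‖(A ^ 0) x‖ ^ 2 := by
        have := hAk x
        simp only [pow_zero, Module.End.one_apply]
        exact pow_le_pow_left₀ (norm_nonneg _) this 2
      linarith
    have h0 : (0:ℝ) ≤ ‖j x‖ := norm_nonneg _
    nlinarith [norm_nonneg (j (A x))]
  let R := LinearMap.range j
  haveI : FiniteDimensional ℂ G := by infer_instance
  let e1 : V ≃ₗ[ℂ] R := LinearEquiv.ofInjective j hinj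
  have he1 : ∀ x : V, ‖(e1 x : G)‖ = ‖j x‖ := fun x => rfl
  let e2 := (stdOrthonormalBasis ℂ R).repr
  refine ⟨finrank ℂ R, e1.trans e2.toLinearEquiv, fun x => ?_⟩
  simp only [LinearEquiv.trans_apply, LinearIsometryEquiv.coe_toLinearEquiv,
    LinearIsometryEquiv.norm_map]
  show ‖(e1 (A x) : G)‖ ≤ ‖(e1 x : G)‖
  rw [he1, he1]; exact hcontr x

theorem aux_small_eig (V : Type) [NormedAddCommGroup V] [InnerProductSpace ℂ V]
    [FiniteDimensional ℂ V]
    (A : V →ₗ[ℂ] V) (μ : ℂ) (hμ : ‖μ‖ < 1) (hnil : IsNilpotent (A - μ • 1)) :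
    ∃ k, 0 < k ∧ ∀ x, ‖(A ^ k) x‖ ≤ ‖x‖ := by
  classical
  set N : V →ₗ[ℂ] V := A - μ • 1 with hN
  obtain ⟨d0, hd0⟩ := hnil
  set d := d0 + 1 with hdd
  have hd : N ^ d = 0 := by rw [hdd, pow_succ, hd0, zero_mul]
  set r := ‖μ‖ with hr
  have hr0 : 0 ≤ r := norm_nonneg _
  set c : ℕ → ℝ := fun t => ‖LinearMap.toContinuousLinearMap (N ^ t)‖ with hc
  have hc0 : ∀ t, 0 ≤ c t := fun t => norm_nonneg _
  have hcle : ∀ t v, ‖(N ^ t) v‖ ≤ c t * ‖v‖ := fun t v =>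
    (LinearMap.toContinuousLinearMap (N ^ t)).le_opNorm v
  have hczero : ∀ t, d ≤ t → c t = 0 := by
    intro t ht
    have hz : N ^ t = 0 := by
      calc N ^ t = N ^ d * N ^ (t - d) := by rw [← pow_add, Nat.add_sub_cancel' ht]
      _ = 0 := by rw [hd, zero_mul]
    show ‖LinearMap.toContinuousLinearMap (N ^ t)‖ = 0
    rw [hz, map_zero, norm_zero]
  set g : ℕ → ℝ := fun n => ∑ t ∈ range d, (n.choose (n - t) : ℝ) * r ^ (n - t) * c t with hg
  -- g tends to 0
  have hgto : Tendsto g atTop (nhds 0) := by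
    have h0 : (0:ℝ) = ∑ t ∈ range d, (0:ℝ) := by simp
    rw [hg, h0]
    apply tendsto_finset_sum
    intro t _
    rcases eq_or_lt_of_le hr0 with hr0' | hrpos
    · refine Tendsto.congr' ?_ tendsto_const_nhds
      filter_upwards [eventually_ge_atTop (t + 1)] with n hn
      have : r ^ (n - t) = 0 := by rw [← hr0']; exact zero_pow (by omega)
      rw [this]; ring
    · refine squeeze_zero' (g := fun n : ℕ => (c t / r ^ t) * ((n:ℝ) ^ t * r ^ n)) ?_ ?_ ?_
      · filter_upwards with n; positivity
      · filter_upwards [eventually_ge_atTop t] with n hn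
        have h1 : (n.choose (n - t) : ℝ) ≤ (n:ℝ) ^ t := by
          rw [Nat.choose_symm hn]
          exact_mod_cast Nat.choose_le_pow n t
        have h2 : r ^ (n - t) * r ^ t = r ^ n := by rw [← pow_add]; congr 1; omega
        have hrt : (0:ℝ) < r ^ t := pow_pos hrpos t
        rw [div_mul_eq_mul_div, le_div_iff₀ hrt]
        calc (n.choose (n - t) : ℝ) * r ^ (n - t) * c t * r ^ t
            = ((n.choose (n - t) : ℝ) * c t) * (r ^ (n-t) * r ^ t) := by ring
          _ = ((n.choose (n - t) : ℝ) * c t) * r ^ n := by rw [h2]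
          _ ≤ ((n:ℝ) ^ t * c t) * r ^ n := by
              apply mul_le_mul_of_nonneg_right _ (pow_nonneg hr0 _)
              exact mul_le_mul_of_nonneg_right h1 (hc0 t)
          _ = c t * ((n:ℝ) ^ t * r ^ n) := by ring
      · simpa using
          (tendsto_pow_const_mul_const_pow_of_lt_one t hrpos.le hμ).const_mul (c t / r ^ t)
  -- main bound
  have hA : A = μ • (1 : V →ₗ[ℂ] V) + N := by rw [hN]; abel
  have hcomm : Commute (μ • (1 : V →ₗ[ℂ] V)) N := by
    show μ • (1 : V →ₗ[ℂ] V) * N = N * (μ • 1)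
    ext w
    simp [Module.End.mul_apply]
  have hbound : ∀ n, d ≤ n → ∀ v : V, ‖(A ^ n) v‖ ≤ g n * ‖v‖ := by
    intro n hdn v
    have expand := hcomm.add_pow n
    have hterm : ∀ m, ((μ • (1 : V →ₗ[ℂ] V)) ^ m * N ^ (n - m) * (n.choose m : V →ₗ[ℂ] V)) v
        = (n.choose m : ℂ) • μ ^ m • (N ^ (n - m)) v := by
      intro m
      rw [smul_pow, one_pow]
      rw [Module.End.mul_apply, Module.End.mul_apply, Module.End.natCast_apply,
        map_nsmul, map_nsmul, LinearMap.smul_apply, Module.End.one_apply,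
        Nat.cast_smul_eq_nsmul, smul_comm]
    have step1 : ‖(A ^ n) v‖ ≤ ∑ m ∈ range (n+1), (n.choose m : ℝ) * r ^ m * c (n - m) * ‖v‖ := by
      calc ‖(A ^ n) v‖ = ‖∑ m ∈ range (n+1),
            ((μ • (1 : V →ₗ[ℂ] V)) ^ m * N ^ (n - m) * (n.choose m : V →ₗ[ℂ] V)) v‖ := by
            rw [hA, expand]
            rw [LinearMap.coe_sum, Finset.sum_apply]
        _ ≤ ∑ m ∈ range (n+1),
            ‖((μ • (1 : V →ₗ[ℂ] V)) ^ m * N ^ (n - m) * (n.choose m : V →ₗ[ℂ] V)) v‖ :=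
            norm_sum_le _ _
        _ ≤ ∑ m ∈ range (n+1), (n.choose m : ℝ) * r ^ m * c (n - m) * ‖v‖ := by
            apply Finset.sum_le_sum
            intro m _
            rw [hterm m, norm_smul, norm_smul]
            simp only [Complex.norm_natCast, norm_pow]
            calc (n.choose m : ℝ) * (r ^ m * ‖(N ^ (n - m)) v‖)
                ≤ (n.choose m : ℝ) * (r ^ m * (c (n - m) * ‖v‖)) := by
                  apply mul_le_mul_of_nonneg_left _ (by positivity)
                  exact mul_le_mul_of_nonneg_left (hcle _ v) (by positivity)
              _ = (n.choose m : ℝ) * r ^ m * c (n - m) * ‖v‖ := by ring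
    have step2 : ∑ m ∈ range (n+1), (n.choose m : ℝ) * r ^ m * c (n - m) = g n := by
      have hrefl := Finset.sum_range_reflect
        (fun m => (n.choose m : ℝ) * r ^ m * c (n - m)) (n + 1)
      simp only [Nat.add_sub_cancel] at hrefl
      rw [← hrefl]
      have hcongr : ∀ t ∈ range (n+1),
          (n.choose (n - t) : ℝ) * r ^ (n - t) * c (n - (n - t))
            = (n.choose (n - t) : ℝ) * r ^ (n - t) * c t := by
        intro t ht
        rw [Finset.mem_range] at ht
        congr 2
        omega
      rw [Finset.sum_congr rfl hcongr, hg]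
      symm
      apply Finset.sum_subset
      · exact Finset.range_subset_range.2 (by omega)
      · intro x _ hx
        rw [Finset.mem_range, not_lt] at hx
        rw [hczero x hx]; ring
    calc ‖(A ^ n) v‖ ≤ ∑ m ∈ range (n+1), (n.choose m : ℝ) * r ^ m * c (n - m) * ‖v‖ := step1
      _ = (∑ m ∈ range (n+1), (n.choose m : ℝ) * r ^ m * c (n - m)) * ‖v‖ :=
          (Finset.sum_mul _ _ _).symm
      _ = g n * ‖v‖ := by rw [step2]
  -- extract k
  have hev : ∀ᶠ n in atTop, g n < 1 ∧ max d 1 ≤ n := by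
    filter_upwards [hgto.eventually_lt_const one_pos, eventually_ge_atTop (max d 1)] with n h1 h2
    exact ⟨h1, h2⟩
  obtain ⟨n, hn1, hn2⟩ := hev.exists
  refine ⟨n, by omega, fun v => ?_⟩
  calc ‖(A ^ n) v‖ ≤ g n * ‖v‖ := hbound n (by omega) v
    _ ≤ ‖v‖ := mul_le_of_le_one_left (norm_nonneg v) hn1.le

theorem aux_main (E : Type) [NormedAddCommGroup E] [InnerProductSpace ℂ E]
    [FiniteDimensional ℂ E] (L : Module.End ℂ E)
    (hspec : ∀ lam : ℂ, Module.End.HasEigenvalue L lam → ‖lam‖ ≤ 1)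
    (hsemi : ∀ lam : ℂ, Module.End.HasEigenvalue L lam → ‖lam‖ = 1 →
      Module.End.eigenspace L lam = Module.End.maxGenEigenspace L lam) :
    ∃ (d : ℕ) (T : E ≃ₗ[ℂ] EuclideanSpace ℂ (Fin d)), ∀ x, ‖T (L x)‖ ≤ ‖T x‖ := by
  classical
  set V : ℂ → Submodule ℂ E := L.maxGenEigenspace with hV
  have hmap : ∀ μ, Set.MapsTo L (V μ) (V μ) := fun μ =>
    Module.End.mapsTo_maxGenEigenspace_of_comm (Commute.refl L) μ
  set Lr : ∀ μ, V μ →ₗ[ℂ] V μ := fun μ => L.restrict (hmap μ) with hLr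
  have heig : ∀ μ, V μ ≠ ⊥ → L.HasEigenvalue μ := by
    intro μ h
    apply Module.End.hasEigenvalue_of_hasGenEigenvalue (k := finrank ℂ E)
    show L.genEigenspace μ (finrank ℂ E) ≠ ⊥
    rwa [← Module.End.maxGenEigenspace_eq_genEigenspace_finrank]
  -- power contraction on each block
  have hpow : ∀ μ, ∃ k, 0 < k ∧ ∀ x : V μ, ‖((Lr μ) ^ k) x‖ ≤ ‖x‖ := by
    intro μ
    by_cases hbot : V μ = ⊥
    · refine ⟨1, one_pos, fun x => ?_⟩
      have hx0 : (x : E) = 0 := (Submodule.eq_bot_iff _).1 hbot x x.2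
      have : x = 0 := Subtype.ext hx0
      simp [this]
    · have hev := heig μ hbot
      rcases lt_or_eq_of_le (hspec μ hev) with hlt | heq1
      · -- modulus < 1 : nilpotent part
        have hnil0 := Module.End.isNilpotent_restrict_maxGenEigenspace_sub_algebraMap L μ
        have hagree : (L - algebraMap ℂ (Module.End ℂ E) μ).restrict
            (Module.End.mapsTo_maxGenEigenspace_of_comm
              (Algebra.mul_sub_algebraMap_commutes L μ) μ) = Lr μ - μ • 1 := by
          ext x
          simp [LinearMap.restrict_apply, LinearMap.sub_apply, Module.algebraMap_end_apply,
            hLr]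
          show (L - algebraMap ℂ (Module.End ℂ E) μ) (x : E) = L (x : E) - μ • (x : E)
          rw [LinearMap.sub_apply, Module.algebraMap_end_apply]
        rw [hagree] at hnil0
        exact aux_small_eig (V μ) (Lr μ) μ hlt hnil0
      · -- modulus = 1 : semisimple
        refine ⟨1, one_pos, fun x => ?_⟩
        have hx : (x : E) ∈ L.eigenspace μ := by
          rw [hsemi μ hev heq1]; exact x.2
        have hLx : L (x : E) = μ • (x : E) := by
          rwa [Module.End.mem_eigenspace_iff] at hx
        have : ‖((Lr μ) ^ 1) x‖ = ‖L (x : E)‖ := by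
          rw [pow_one]; rfl
        rw [this, hLx, norm_smul, heq1, one_mul]
        exact le_of_eq rfl
  have hequiv : ∀ μ, ∃ (d : ℕ) (e : V μ ≃ₗ[ℂ] EuclideanSpace ℂ (Fin d)),
      ∀ x, ‖e (Lr μ x)‖ ≤ ‖e x‖ := by
    intro μ
    obtain ⟨k, hk, hkc⟩ := hpow μ
    exact aux_pow_contraction (V μ) (Lr μ) k hk hkc
  choose dim eqv heqv using hequiv
  -- finite support and internal direct sum
  have hind : iSupIndep V := L.independent_maxGenEigenspace
  have hfin : {μ : ℂ | V μ ≠ ⊥}.Finite := WellFoundedGT.finite_ne_bot_of_iSupIndep hind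
  let Λ : Finset ℂ := hfin.toFinset
  set A : Λ → Submodule ℂ E := fun μ => V μ with hA
  have hsupeq : ⨆ μ : Λ, A μ = ⊤ := by
    rw [← Module.End.iSup_maxGenEigenspace_eq_top L]
    apply le_antisymm
    · exact iSup_le fun μ => le_iSup (fun μ : ℂ => V μ) (μ : ℂ)
    · refine iSup_le fun μ => ?_
      by_cases h : V μ = ⊥
      · exact le_trans (le_of_eq h) bot_le
      · have hmem : μ ∈ Λ := by
          rw [Set.Finite.mem_toFinset]; exact h
        exact le_iSup_of_le ⟨μ, hmem⟩ le_rfl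
  have hint : DirectSum.IsInternal A := by
    rw [DirectSum.isInternal_submodule_iff_iSupIndep_and_iSup_eq_top]
    exact ⟨hind.comp Subtype.val_injective, hsupeq⟩
  set eD : (⨁ μ, A μ) ≃ₗ[ℂ] E := LinearEquiv.ofBijective (DirectSum.coeLinearMap A) hint
    with heD
  set eP : E ≃ₗ[ℂ] PiLp 2 (fun μ : Λ => A μ) :=
    eD.symm ≪≫ₗ DirectSum.linearEquivFunOnFintype ℂ ↥Λ (fun μ => ↥(A μ))
      ≪≫ₗ (WithLp.linearEquiv 2 ℂ _).symm with heP
  have hePcomp : ∀ (x : E) (μ : Λ), eP x μ = eD.symm x μ := fun x μ => rfl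
  -- block diagonality
  have hblock : ∀ (x : E) (μ : Λ), eP (L x) μ = Lr μ (eP x μ) := by
    intro x
    have hx : x ∈ ⨆ μ : Λ, A μ := by rw [hsupeq]; trivial
    refine Submodule.iSup_induction (motive := fun x => ∀ μ : Λ, eP (L x) μ = Lr μ (eP x μ))
      A hx ?_ ?_ ?_
    · intro μ₀ y hy ν
      have hLy : L y ∈ A μ₀ := hmap μ₀ hy
      by_cases hν : ν = μ₀
      · subst hν
        rw [hePcomp, hePcomp, hint.ofBijective_coeLinearMap_of_mem hLy,
          hint.ofBijective_coeLinearMap_of_mem hy]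
        exact Subtype.ext rfl
      · rw [hePcomp, hePcomp, hint.ofBijective_coeLinearMap_of_mem_ne (Ne.symm hν) hLy,
          hint.ofBijective_coeLinearMap_of_mem_ne (Ne.symm hν) hy, map_zero]
    · intro ν; simp only [map_zero]
      have : (0 : PiLp 2 (fun μ : Λ => A μ)) ν = 0 := rfl
      rw [this, map_zero]
    · intro y z hy hz ν
      simp only [map_add] at *
      have hadd : ∀ w w' : PiLp 2 (fun μ : Λ => A μ), (w + w') ν = w ν + w' ν := fun _ _ => rfl
      rw [hadd, hadd, hy ν, hz ν, map_add]
  -- assemble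
  set F := PiLp 2 (fun μ : Λ => EuclideanSpace ℂ (Fin (dim μ))) with hF
  set eF : PiLp 2 (fun μ : Λ => A μ) ≃ₗ[ℂ] F :=
    (WithLp.linearEquiv 2 ℂ _) ≪≫ₗ (LinearEquiv.piCongrRight fun μ : Λ => eqv μ)
      ≪≫ₗ (WithLp.linearEquiv 2 ℂ _).symm with heF
  have heFcomp : ∀ (y : PiLp 2 (fun μ : Λ => A μ)) (μ : Λ), eF y μ = eqv μ (y μ) :=
    fun y μ => rfl
  have hnorm : ∀ x : E, ‖eF (eP (L x))‖ ≤ ‖eF (eP x)‖ := by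
    intro x
    have h1 : ∀ z : F, ‖z‖ ^ 2 = ∑ μ : Λ, ‖z μ‖ ^ 2 := fun z => PiLp.norm_sq_eq_of_L2 _ z
    have hsq : ‖eF (eP (L x))‖ ^ 2 ≤ ‖eF (eP x)‖ ^ 2 := by
      rw [h1, h1]
      apply Finset.sum_le_sum
      intro μ _
      rw [heFcomp, heFcomp, hblock x μ]
      have := heqv μ (eP x μ)
      exact pow_le_pow_left₀ (norm_nonneg _) this 2
    nlinarith [norm_nonneg (eF (eP (L x))), norm_nonneg (eF (eP x))]
  haveI : FiniteDimensional ℂ F := by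
    apply FiniteDimensional.of_injective (WithLp.linearEquiv 2 ℂ _).toLinearMap
      (WithLp.linearEquiv 2 ℂ _).injective
  set e2 := (stdOrthonormalBasis ℂ F).repr with he2
  refine ⟨finrank ℂ F, (eP ≪≫ₗ eF) ≪≫ₗ e2.toLinearEquiv, fun x => ?_⟩
  simp only [LinearEquiv.trans_apply, LinearIsometryEquiv.coe_toLinearEquiv,
    LinearIsometryEquiv.norm_map]
  exact hnorm x

end Aux

/-- a matrix with spectral radius at most 1 whose eigenvalues of modulus 1
are semisimple (geometric multiplicity = algebraic multiplicity) is similar to a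
contraction in the `ℓ²` operator norm. -/
theorem similar_to_contraction (n : ℕ) (M : Matrix (Fin n) (Fin n) ℂ)
    (hspec : ∀ lam : ℂ, Module.End.HasEigenvalue M.mulVecLin lam → ‖lam‖ ≤ 1)
    (hsemi : ∀ lam : ℂ, Module.End.HasEigenvalue M.mulVecLin lam → ‖lam‖ = 1 →
      Module.End.eigenspace M.mulVecLin lam = Module.End.maxGenEigenspace M.mulVecLin lam) :
    ∃ S : Matrix (Fin n) (Fin n) ℂ, IsUnit S ∧ ‖S * M * S⁻¹‖ ≤ 1 := by
  classical
  set L' : Module.End ℂ (EuclideanSpace ℂ (Fin n)) := Matrix.toEuclideanLin M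
  have hpowk : ∀ (μ : ℂ) (k : ℕ) (v : Fin n → ℂ),
      ((L' - μ • 1) ^ k) (WithLp.toLp 2 v) = WithLp.toLp 2 (((M.mulVecLin - μ • 1) ^ k) v) := by
    intro μ k
    induction k with
    | zero => intro v; rfl
    | succ k ih =>
      intro v
      rw [pow_succ, pow_succ, Module.End.mul_apply, Module.End.mul_apply]
      exact ih _
  have heigsp : ∀ (μ : ℂ) (x : EuclideanSpace ℂ (Fin n)),
      x ∈ L'.eigenspace μ ↔ WithLp.ofLp x ∈ Module.End.eigenspace M.mulVecLin μ := by
    intro μ x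
    rw [Module.End.mem_eigenspace_iff, Module.End.mem_eigenspace_iff]
    constructor
    · intro h; exact congrArg WithLp.ofLp h
    · intro h; exact congrArg (WithLp.toLp 2) h
  have hmax : ∀ (μ : ℂ) (x : EuclideanSpace ℂ (Fin n)),
      x ∈ L'.maxGenEigenspace μ ↔ WithLp.ofLp x ∈ Module.End.maxGenEigenspace M.mulVecLin μ := by
    intro μ x
    rw [Module.End.mem_maxGenEigenspace, Module.End.mem_maxGenEigenspace]
    refine exists_congr fun k => ?_
    have h2 := hpowk μ k (WithLp.ofLp x)
    rw [WithLp.toLp_ofLp] at h2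
    constructor
    · intro h; rw [h] at h2; exact congrArg WithLp.ofLp h2.symm
    · intro h; rw [h] at h2; exact h2.trans rfl
  have heig : ∀ μ : ℂ, L'.HasEigenvalue μ → Module.End.HasEigenvalue M.mulVecLin μ := by
    intro μ h
    obtain ⟨x, hx, hx0⟩ := h.exists_hasEigenvector
    refine Module.End.hasEigenvalue_of_hasEigenvector ⟨(heigsp μ x).1 hx, fun h0 => hx0 ?_⟩
    rw [← WithLp.toLp_ofLp (x := x), h0]; rfl
  have hspec' : ∀ lam : ℂ, L'.HasEigenvalue lam → ‖lam‖ ≤ 1 := fun lam h => hspec lam (heig lam h)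
  have hsemi' : ∀ lam : ℂ, L'.HasEigenvalue lam → ‖lam‖ = 1 →
      L'.eigenspace lam = L'.maxGenEigenspace lam := by
    intro lam h h1
    have := hsemi lam (heig lam h) h1
    ext x
    rw [heigsp, hmax, this]
  obtain ⟨d, T, hT⟩ :=
    aux_main (EuclideanSpace ℂ (Fin n)) L'
      hspec' hsemi'
  have hd : d = n := by
    have h1 := T.finrank_eq
    simpa [finrank_euclideanSpace_fin] using h1.symm
  subst hd
  set T2 : EuclideanSpace ℂ (Fin d) ≃ₗ[ℂ] EuclideanSpace ℂ (Fin d) := T with hT2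
  set T' : (Fin d → ℂ) ≃ₗ[ℂ] (Fin d → ℂ) :=
    (WithLp.linearEquiv 2 ℂ (Fin d → ℂ)).symm ≪≫ₗ T2 ≪≫ₗ (WithLp.linearEquiv 2 ℂ (Fin d → ℂ))
    with hT'
  set S : Matrix (Fin d) (Fin d) ℂ := LinearMap.toMatrix' T'.toLinearMap with hS
  set S' : Matrix (Fin d) (Fin d) ℂ := LinearMap.toMatrix' T'.symm.toLinearMap with hS'
  have hSS' : S * S' = 1 := by
    rw [hS, hS', ← LinearMap.toMatrix'_comp]
    have : T'.toLinearMap.comp T'.symm.toLinearMap = LinearMap.id := by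
      ext x; simp
    rw [this, LinearMap.toMatrix'_id]
  have hS'S : S' * S = 1 := by
    rw [hS, hS', ← LinearMap.toMatrix'_comp]
    have : T'.symm.toLinearMap.comp T'.toLinearMap = LinearMap.id := by
      ext x; simp
    rw [this, LinearMap.toMatrix'_id]
  refine ⟨S, ⟨⟨S, S', hSS', hS'S⟩, rfl⟩, ?_⟩
  rw [Matrix.inv_eq_right_inv hSS']
  rw [Matrix.l2_opNorm_def]
  apply ContinuousLinearMap.opNorm_le_bound _ zero_le_one
  intro x
  rw [one_mul]
  have key : (Matrix.toEuclideanLin (S * M * S')) x = T2 (L' (T2.symm x)) := by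
    have h1 : ∀ (B : Matrix (Fin d) (Fin d) ℂ) (v : EuclideanSpace ℂ (Fin d)),
        Matrix.toEuclideanLin B v = (WithLp.equiv 2 _).symm (B.mulVec (WithLp.equiv 2 _ v)) :=
      fun B v => rfl
    rw [h1]
    have h2 : (S * M * S').mulVec (WithLp.equiv 2 _ x)
        = S.mulVec (M.mulVec (S'.mulVec (WithLp.equiv 2 _ x))) := by
      rw [Matrix.mulVec_mulVec, Matrix.mulVec_mulVec]
    rw [h2]
    have hSmul : ∀ v : Fin d → ℂ, S.mulVec v = T' v := fun v => by
      rw [hS, ← Matrix.toLin'_apply, Matrix.toLin'_toMatrix']; rfl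
    have hS'mul : ∀ v : Fin d → ℂ, S'.mulVec v = T'.symm v := fun v => by
      rw [hS', ← Matrix.toLin'_apply, Matrix.toLin'_toMatrix']; rfl
    rw [hSmul, hS'mul]
    rfl
  show ‖(Matrix.toEuclideanLin (S * M * S')) x‖ ≤ ‖x‖
  rw [key]
  calc ‖T2 (L' (T2.symm x))‖ ≤ ‖T2 (T2.symm x)‖ := hT (T2.symm x)
    _ = ‖x‖ := by rw [LinearEquiv.apply_symm_apply]
end

section
/- Let (a_t)_{t∈ℕ₀} be a sequence such that a_t = tr(A·T^t(ρ)) decays algebraically, e.g., a_t = 1/(t+1), for a trace-preserving linear map T on M_d(ℂ). Then no finite d suffices: the space 𝒱 of delayed vectors of the sequence (1/(t+1))_{t≥0} is infinite-dimensional. -/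
open Matrix
open scoped ComplexOrder



open Matrix MeasureTheory intervalIntegral
open scoped ComplexOrder

-- linear independence of finitely many delayed vectors
lemma alg_decay_lin_indep (v : ℕ → ℕ → ℝ) (hv : ∀ τ k : ℕ, v τ k = 1 / (τ + k + 1))
    (n : ℕ) : LinearIndependent ℝ (fun j : Fin n => v j) := by
  rw [Fintype.linearIndependent_iff]
  intro c hc
  -- the polynomial-ish function
  set g : ℝ → ℝ := fun x => ∑ j : Fin n, c j * x ^ (j : ℕ) with hg
  have hgc : Continuous g := by
    apply continuous_finset_sum
    intro j _
    exact continuous_const.mul (continuous_pow _)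
  -- evaluate relation at each k
  have hrel : ∀ k : ℕ, ∑ j : Fin n, c j / ((j : ℝ) + k + 1) = 0 := by
    intro k
    have := congrFun hc k
    simpa [Finset.sum_apply, hv, div_eq_mul_inv] using this
  have hint : ∀ m : ℕ, (∫ x in (0:ℝ)..1, x ^ m) = 1 / ((m : ℝ) + 1) := by
    intro m
    rw [integral_pow]
    norm_num
  -- moment integrals vanish
  have hmom : ∀ k : ℕ, (∫ x in (0:ℝ)..1, x ^ k * g x) = 0 := by
    intro k
    have h1 : (∫ x in (0:ℝ)..1, x ^ k * g x)
        = ∑ j : Fin n, ∫ x in (0:ℝ)..1, c j * x ^ (k + (j : ℕ)) := by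
      rw [← intervalIntegral.integral_finset_sum
        (fun j _ => (Continuous.intervalIntegrable (by fun_prop) 0 1))]
      congr 1; funext x
      rw [hg, Finset.mul_sum]
      apply Finset.sum_congr rfl
      intro j _
      ring
    rw [h1]
    have h2 : ∀ j : Fin n, (∫ x in (0:ℝ)..1, c j * x ^ (k + (j : ℕ)))
        = c j / ((j : ℝ) + k + 1) := by
      intro j
      rw [intervalIntegral.integral_const_mul, hint]
      push_cast
      ring_nf
    simp_rw [h2]
    exact hrel k
  -- hence ∫ g^2 = 0
  have hsq : (∫ x in (0:ℝ)..1, g x * g x) = 0 := by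
    have h1 : (∫ x in (0:ℝ)..1, g x * g x)
        = ∑ j : Fin n, ∫ x in (0:ℝ)..1, c j * (x ^ (j : ℕ) * g x) := by
      rw [← intervalIntegral.integral_finset_sum
        (fun j _ => (Continuous.intervalIntegrable
          (show Continuous (fun x => c j * (x ^ (j : ℕ) * g x)) from
            continuous_const.mul ((continuous_pow _).mul hgc)) 0 1))]
      congr 1; funext x
      conv_lhs => rw [hg]
      rw [Finset.sum_mul]
      apply Finset.sum_congr rfl
      intro j _
      ring
    rw [h1]
    simp [intervalIntegral.integral_const_mul, hmom]
  -- so g = 0 a.e. on Ioc 0 1, hence on Ioo 0 1 by continuity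
  have hae : (fun x => g x * g x) =ᵐ[volume.restrict (Set.Ioc (0:ℝ) 1)] 0 := by
    rw [← intervalIntegral.integral_eq_zero_iff_of_le_of_nonneg_ae (by norm_num)
      (Filter.Eventually.of_forall fun x => mul_self_nonneg _)
      ((hgc.mul hgc).intervalIntegrable _ _)]
    exact hsq
  have hae' : (fun x => g x * g x) =ᵐ[volume.restrict (Set.Ioo (0:ℝ) 1)] 0 :=
    hae.filter_mono (MeasureTheory.ae_mono (Measure.restrict_mono Set.Ioo_subset_Ioc_self le_rfl))
  have heq : Set.EqOn (fun x => g x * g x) 0 (Set.Ioo (0:ℝ) 1) :=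
    Measure.eqOn_open_of_ae_eq hae' isOpen_Ioo (hgc.mul hgc).continuousOn continuousOn_const
  have hg0 : ∀ x ∈ Set.Ioo (0:ℝ) 1, g x = 0 := by
    intro x hx
    have := heq hx
    simp only [Pi.zero_apply] at this
    exact mul_self_eq_zero.mp this
  -- polynomial identically zero
  set P : Polynomial ℝ := ∑ j : Fin n, Polynomial.monomial (j : ℕ) (c j) with hP
  have hPeval : ∀ x, P.eval x = g x := by
    intro x
    rw [hP, hg, Polynomial.eval_finset_sum]
    simp [Polynomial.eval_monomial]
  have hP0 : P = 0 := by
    apply Polynomial.eq_zero_of_infinite_isRoot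
    apply Set.Infinite.mono (s := Set.Ioo (0:ℝ) 1)
    · intro x hx
      simp only [Set.mem_setOf_eq, Polynomial.IsRoot, hPeval]
      exact hg0 x hx
    · exact Set.Ioo_infinite (by norm_num : (0:ℝ) < 1)
  intro i
  have : P.coeff (i : ℕ) = c i := by
    rw [hP, Polynomial.finset_sum_coeff]
    rw [Finset.sum_eq_single i]
    · simp [Polynomial.coeff_monomial]
    · intro j _ hji
      rw [Polynomial.coeff_monomial, if_neg (by
        simpa [Fin.val_injective.eq_iff] using fun h => hji (Fin.val_injective h))]
    · simp
  rw [← this, hP0]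
  simp

/-- the space of delayed vectors of the algebraically decaying sequence
`a t = 1/(t+1)` is infinite dimensional; consequently no finite-dimensional
trace-preserving linear evolution `tr(A Tᵗ(ρ))` can produce it. -/
theorem algebraic_decay_needs_infinite_dimension
    (v : ℕ → ℕ → ℝ) (hv : ∀ τ k : ℕ, v τ k = 1 / (τ + k + 1)) :
    ¬ FiniteDimensional ℝ ↥(Submodule.span ℝ (Set.range v)) ∧
      ∀ (d : ℕ) (T : Module.End ℂ (Matrix (Fin d) (Fin d) ℂ)),
        (∀ X, (T X).trace = X.trace) →
        ∀ (ρ : Matrix (Fin d) (Fin d) ℂ), ρ.PosSemidef → ρ.trace = 1 →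
        ∀ A : Matrix (Fin d) (Fin d) ℂ, A.IsHermitian →
        ¬ (∀ t : ℕ, (A * ((T ^ t) ρ)).trace = 1 / (t + 1)) := by
  have hfd : ¬ FiniteDimensional ℝ ↥(Submodule.span ℝ (Set.range v)) := by
    intro hFD
    set S := Submodule.span ℝ (Set.range v) with hS
    set m := Module.finrank ℝ ↥S with hm
    -- the family of m+1 vectors inside S
    have hmem : ∀ j : Fin (m+1), v j ∈ S :=
      fun j => Submodule.subset_span ⟨j, rfl⟩
    set b : Fin (m+1) → ↥S := fun j => ⟨v j, hmem j⟩ with hb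
    have hbi : LinearIndependent ℝ b := by
      have h1 : LinearIndependent ℝ (fun j : Fin (m+1) => v j) :=
        alg_decay_lin_indep v hv (m+1)
      have : (fun j : Fin (m+1) => v j) = S.subtype ∘ b := rfl
      rw [this] at h1
      exact h1.of_comp S.subtype
    have := hbi.fintype_card_le_finrank
    simp [hm] at this
  refine ⟨hfd, ?_⟩
  intro d T hT ρ hρ hρ1 A hA h
  apply hfd
  -- linear map Φ : matrices → sequences
  let Φ : Matrix (Fin d) (Fin d) ℂ →ₗ[ℝ] (ℕ → ℝ) :=
    LinearMap.pi (fun k =>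
      Complex.reLm ∘ₗ ((Matrix.traceLinearMap (Fin d) ℂ ℂ).restrictScalars ℝ)
        ∘ₗ ((LinearMap.mulLeft ℂ A).restrictScalars ℝ)
        ∘ₗ ((T ^ k : Module.End ℂ _).restrictScalars ℝ))
  have hrange : Set.range v ⊆ (LinearMap.range Φ : Set (ℕ → ℝ)) := by
    rintro _ ⟨τ, rfl⟩
    refine ⟨(T ^ τ) ρ, ?_⟩
    funext k
    have hpow : (T ^ k) ((T ^ τ) ρ) = (T ^ (τ + k)) ρ := by
      rw [add_comm, pow_add, Module.End.mul_apply]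
    simp only [Φ, LinearMap.pi_apply, LinearMap.comp_apply, LinearMap.restrictScalars_apply,
      Complex.reLm_coe, LinearMap.mulLeft_apply, hpow]
    rw [show (Matrix.traceLinearMap (Fin d) ℂ ℂ) (A * (T ^ (τ + k)) ρ)
        = (A * ((T ^ (τ + k)) ρ)).trace from rfl, h (τ + k), hv τ k]
    have hcast : ((τ:ℂ) + (k:ℂ) + 1) = (((τ:ℝ) + (k:ℝ) + 1 : ℝ) : ℂ) := by push_cast; ring
    push_cast
    rw [hcast, ← Complex.ofReal_one, ← Complex.ofReal_div, Complex.ofReal_re]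
  have : Submodule.span ℝ (Set.range v) ≤ LinearMap.range Φ := Submodule.span_le.mpr hrange
  exact Submodule.finiteDimensional_of_le this
end
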